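/- Let k > 1 and φ with |sin φ| < 1/k. Then ∫₀^φ dt/√(1 - k² sin² t) = (1/k)·∫₀^{arcsin(k sin φ)} ds/√(1 - k⁻² sin² s), i.e., F_J(φ, k) = (1/k)·F_J(arcsin(k sin φ), 1/k). -/

import Mathlib

open Real Set in
/-- Reciprocal-modulus transformation of the incomplete elliptic integral of the
first kind: F_J(φ,k) = (1/k)·F_J(arcsin(k sin φ), 1/k) for k > 1. -/
theorem elliptic_first_kind_reciprocal_modulus
    (k φ : ℝ) (hk : 1 < k) (hφ0 : 0 ≤ φ) (hφ : φ < Real.arcsin (1 / k)) :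
    ∫ t in (0:ℝ)..φ, 1 / Real.sqrt (1 - k^2 * Real.sin t ^ 2)
      = (1 / k) * ∫ s in (0:ℝ)..(Real.arcsin (k * Real.sin φ)),
          1 / Real.sqrt (1 - (k⁻¹)^2 * Real.sin s ^ 2) := by
  have hk0 : (0:ℝ) < k := lt_trans one_pos hk
  have hk1 : (1:ℝ)/k < 1 := by rw [div_lt_one hk0]; exact hk
  have hφπ : φ < π/2 := lt_of_lt_of_le hφ (Real.arcsin_le_pi_div_two _)
  set f : ℝ → ℝ := fun t => Real.arcsin (k * Real.sin t) with hf
  set f' : ℝ → ℝ := fun t => (k * Real.cos t) / Real.sqrt (1 - k^2 * Real.sin t ^ 2) with hf'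
  set g : ℝ → ℝ := fun s => 1 / Real.sqrt (1 - (k⁻¹)^2 * Real.sin s ^ 2) with hg
  -- basic facts for t ∈ [0, φ]
  have huIcc : uIcc (0:ℝ) φ = Icc 0 φ := uIcc_of_le hφ0
  have key : ∀ t ∈ Icc (0:ℝ) φ, 0 ≤ Real.sin t ∧ k * Real.sin t < 1 ∧
      0 < Real.cos t ∧ 0 < 1 - k^2 * Real.sin t ^ 2 := by
    intro t ht
    have ht2 : t < π/2 := lt_of_le_of_lt ht.2 hφπ
    have hπ := Real.pi_pos
    have hs0 : 0 ≤ Real.sin t := Real.sin_nonneg_of_nonneg_of_le_pi ht.1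
      (le_trans ht2.le (by linarith))
    have hsin : Real.sin t < 1/k := by
      have hik : 0 < 1/k := by positivity
      have h1 : Real.sin t ≤ Real.sin φ :=
        Real.sin_le_sin_of_le_of_le_pi_div_two (by linarith [ht.1]) hφπ.le ht.2
      have h2 : Real.sin φ < Real.sin (Real.arcsin (1/k)) := by
        apply Real.sin_lt_sin_of_lt_of_le_pi_div_two (by linarith) _ hφ
        exact Real.arcsin_le_pi_div_two _
      rw [Real.sin_arcsin (by linarith) hk1.le] at h2
      linarith
    have hks : k * Real.sin t < 1 := by
      have h3 : k * Real.sin t < k * (1/k) :=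
        mul_lt_mul_of_pos_left hsin hk0
      have h4 : k * (1/k) = 1 := by field_simp
      linarith
    have hcos : 0 < Real.cos t := Real.cos_pos_of_mem_Ioo
      ⟨by linarith [ht.1], ht2⟩
    refine ⟨hs0, hks, hcos, ?_⟩
    have : k^2 * Real.sin t ^ 2 = (k * Real.sin t)^2 := by ring
    rw [this]
    nlinarith [mul_nonneg hk0.le hs0]
  -- derivative
  have hderiv : ∀ t ∈ uIcc (0:ℝ) φ, HasDerivAt f (f' t) t := by
    intro t ht
    rw [huIcc] at ht
    obtain ⟨hs0, hks, hcos, hpos⟩ := key t ht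
    have hks0 : 0 ≤ k * Real.sin t := mul_nonneg hk0.le hs0
    have h1 : HasDerivAt (fun t => k * Real.sin t) (k * Real.cos t) t :=
      (Real.hasDerivAt_sin t).const_mul k
    have h2 : HasDerivAt Real.arcsin (1 / Real.sqrt (1 - (k * Real.sin t)^2))
        (k * Real.sin t) :=
      Real.hasDerivAt_arcsin (by linarith) (by linarith)
    have := h2.comp t h1
    refine HasDerivAt.congr_deriv this ?_
    symm
    show (k * Real.cos t) / Real.sqrt (1 - k^2 * Real.sin t ^ 2) = _
    rw [mul_pow]
    ring
  -- continuity of f'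
  have hcontf' : ContinuousOn f' (uIcc (0:ℝ) φ) := by
    rw [huIcc]
    apply ContinuousOn.div
    · exact (continuous_const.mul Real.continuous_cos).continuousOn
    · exact (Real.continuous_sqrt.comp (by continuity)).continuousOn
    · intro t ht
      exact (Real.sqrt_pos.mpr (key t ht).2.2.2).ne'
  -- continuity of g
  have hgpos : ∀ s : ℝ, 0 < 1 - (k⁻¹)^2 * Real.sin s ^ 2 := by
    intro s
    have h1 : (k⁻¹)^2 < 1 := by
      rw [inv_pow]
      exact inv_lt_one_of_one_lt₀ (by nlinarith)
    have h2 : Real.sin s ^ 2 ≤ 1 := Real.sin_sq_le_one s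
    nlinarith [sq_nonneg (Real.sin s), sq_nonneg (k⁻¹)]
  have hcontg : Continuous g := by
    apply Continuous.div continuous_const
    · exact Real.continuous_sqrt.comp (by continuity)
    · intro s
      exact (Real.sqrt_pos.mpr (hgpos s)).ne'
  have hsub := intervalIntegral.integral_comp_smul_deriv hderiv hcontf' hcontg
  have hf0 : f 0 = 0 := by simp [hf]
  have hfφ : f φ = Real.arcsin (k * Real.sin φ) := rfl
  rw [hf0, hfφ] at hsub
  -- pointwise identity on [0, φ]
  have hpt : ∀ t ∈ uIcc (0:ℝ) φ,
      f' t • (g ∘ f) t = k * (1 / Real.sqrt (1 - k^2 * Real.sin t ^ 2)) := by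
    intro t ht
    rw [huIcc] at ht
    obtain ⟨hs0, hks, hcos, hpos⟩ := key t ht
    have hks0 : 0 ≤ k * Real.sin t := mul_nonneg hk0.le hs0
    have hgf : g (f t) = 1 / Real.cos t := by
      simp only [hg, hf]
      rw [Real.sin_arcsin (by linarith) hks.le]
      have : 1 - (k⁻¹)^2 * (k * Real.sin t)^2 = 1 - Real.sin t ^ 2 := by
        field_simp
      rw [this, ← Real.cos_sq' t, Real.sqrt_sq hcos.le]
    simp only [Function.comp_apply, smul_eq_mul, hgf, hf']
    have hsq : Real.sqrt (1 - k^2 * Real.sin t ^ 2) ≠ 0 :=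
      (Real.sqrt_pos.mpr hpos).ne'
    field_simp
  rw [intervalIntegral.integral_congr hpt] at hsub
  rw [intervalIntegral.integral_const_mul] at hsub
  rw [← hsub]
  field_simp
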